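/- For a partition $\pi \in \Pi(r)_{m|n}$ (i.e. with $\pi_{m+1} \le n$) and the composition $\tilde\pi = (\pi_1,\ldots,\pi_m \mid (\pi_{m+1},\ldots,\pi_{m+n})^t)$, the set $\mathbf{T}^{su}(\pi, \tilde\pi)$ of semistandard $\pi$-supertableaux of content $\tilde\pi$ contains exactly one element. -/

import Mathlib

open Finset

/-- The cells of the Young diagram of `π` (a partition of `r`), as a finite set of
pairs `(row, column)` (`0`-based). -/
def cells (r : ℕ) (pi : ℕ → ℕ) : Finset (ℕ × ℕ) :=
  (Finset.range r ×ˢ Finset.range r).filter (fun p => p.2 < pi p.1)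

/-- `T` is a semistandard `π`-supertableau of content `μ` (entries `0`-based, so the
"even" entries are those `< m` and the "odd" ones those in `[m, m+n)`):
entries lie in `[0, m+n)`; each value `k` occurs `μ k` times; rows and columns weakly
increase; even entries strictly increase down columns; odd entries strictly increase
along rows. -/
def IsSSSupertableau (m n r : ℕ) (pi : ℕ → ℕ) (T : ℕ × ℕ → ℕ) (mu : ℕ → ℕ) : Prop :=
  (∀ p ∈ cells r pi, T p < m + n) ∧
  (∀ k : ℕ, ((cells r pi).filter (fun p => T p = k)).card = mu k) ∧
  (∀ i j : ℕ, j + 1 < pi i →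
    T (i, j) ≤ T (i, j + 1) ∧ (m ≤ T (i, j) → T (i, j) < T (i, j + 1))) ∧
  (∀ i j : ℕ, j < pi (i + 1) →
    T (i, j) ≤ T (i + 1, j) ∧ (T (i, j) < m → T (i, j) < T (i + 1, j)))

/-- The composition `π̃ = (π_1,…,π_m ∣ (π_{m+1},…,π_{m+n})^t)` attached to
`π ∈ Π(r)_{m|n}` (`0`-based index `k`). -/
def tildePi (m r : ℕ) (pi : ℕ → ℕ) (k : ℕ) : ℕ :=
  if k < m then pi k
  else ((Finset.range r).filter (fun i => m ≤ i ∧ k - m < pi i)).card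

/-- The canonical supertableau: row `i < m` is filled with `i`, and cells in rows
`≥ m` and column `j` are filled with `m + j`. -/
def T0 (m : ℕ) (p : ℕ × ℕ) : ℕ := if p.1 < m then p.1 else m + p.2

namespace UniqueSuper

variable {m n r : ℕ} {pi : ℕ → ℕ}

lemma pi_le_r (hanti : Antitone pi) (hsum : ∑ i ∈ Finset.range r, pi i = r)
    (hvanish : ∀ i, r ≤ i → pi i = 0) (i : ℕ) : pi i ≤ r := by
  rcases Nat.eq_zero_or_pos r with h | h
  · simp [hvanish i (by omega)]
  · calc pi i ≤ pi 0 := hanti (Nat.zero_le i)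
    _ ≤ ∑ i ∈ Finset.range r, pi i :=
        Finset.single_le_sum (fun _ _ => Nat.zero_le _) (Finset.mem_range.mpr h)
    _ = r := hsum

lemma mem_cells (hle : ∀ i, pi i ≤ r) {p : ℕ × ℕ} :
    p ∈ cells r pi ↔ p.1 < r ∧ p.2 < pi p.1 := by
  simp only [cells, Finset.mem_filter, Finset.mem_product, Finset.mem_range]
  constructor
  · rintro ⟨⟨h1, _⟩, h3⟩; exact ⟨h1, h3⟩
  · rintro ⟨h1, h2⟩; exact ⟨⟨h1, lt_of_lt_of_le h2 (hle p.1)⟩, h2⟩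

lemma mem_cells' (hle : ∀ i, pi i ≤ r) {i j : ℕ} :
    ((i, j) : ℕ × ℕ) ∈ cells r pi ↔ i < r ∧ j < pi i := mem_cells hle

lemma card_row (hle : ∀ i, pi i ≤ r) (hvanish : ∀ i, r ≤ i → pi i = 0) (k : ℕ) :
    ((cells r pi).filter (fun p => p.1 = k)).card = pi k := by
  have himg : (cells r pi).filter (fun p => p.1 = k)
      = (Finset.range (pi k)).image (fun j => (k, j)) := by
    ext ⟨i, j⟩
    simp only [Finset.mem_filter, mem_cells hle, Finset.mem_image, Finset.mem_range,
      Prod.mk.injEq]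
    constructor
    · rintro ⟨⟨h1, h2⟩, rfl⟩
      exact ⟨j, h2, rfl, rfl⟩
    · rintro ⟨a, ha, rfl, rfl⟩
      have hkr : k < r := by
        by_contra h
        have := hvanish k (by omega)
        omega
      exact ⟨⟨hkr, ha⟩, rfl⟩
  rw [himg, Finset.card_image_of_injective _ (fun a b h => by simpa using h),
    Finset.card_range]

lemma card_col (hle : ∀ i, pi i ≤ r) (c : ℕ) :
    ((cells r pi).filter (fun p => m ≤ p.1 ∧ p.2 = c)).card = tildePi m r pi (m + c) := by
  have h1 : tildePi m r pi (m + c)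
      = ((Finset.range r).filter (fun i => m ≤ i ∧ c < pi i)).card := by
    rw [tildePi, if_neg (by omega)]
    congr 1
    ext i
    simp only [Finset.mem_filter, Finset.mem_range]
    constructor
    · rintro ⟨h, h2, h3⟩; exact ⟨h, h2, by omega⟩
    · rintro ⟨h, h2, h3⟩; exact ⟨h, h2, by omega⟩
  rw [h1]
  have himg : (cells r pi).filter (fun p => m ≤ p.1 ∧ p.2 = c)
      = ((Finset.range r).filter (fun i => m ≤ i ∧ c < pi i)).image (fun i => (i, c)) := by
    ext ⟨i, j⟩
    simp only [Finset.mem_filter, mem_cells hle, Finset.mem_image, Finset.mem_range,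
      Prod.mk.injEq]
    constructor
    · rintro ⟨⟨hu1, hu2⟩, hu3, rfl⟩
      exact ⟨i, ⟨hu1, hu3, hu2⟩, rfl, rfl⟩
    · rintro ⟨a, ⟨hu1, hu2, hu3⟩, rfl, rfl⟩
      exact ⟨⟨hu1, hu3⟩, hu2, rfl⟩
  rw [himg, Finset.card_image_of_injective _ (fun a b h => by simpa using h)]

lemma exists_T0 (hanti : Antitone pi) (hsum : ∑ i ∈ Finset.range r, pi i = r)
    (hvanish : ∀ i, r ≤ i → pi i = 0) (hmn : pi m ≤ n) :
    IsSSSupertableau m n r pi (T0 m) (tildePi m r pi) := by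
  have hle := pi_le_r hanti hsum hvanish
  refine ⟨?_, ?_, ?_, ?_⟩
  · intro p hp
    rw [mem_cells hle] at hp
    by_cases h : p.1 < m
    · simp only [T0, if_pos h]; omega
    · simp only [T0, if_neg h]
      have : pi p.1 ≤ pi m := hanti (by omega)
      omega
  · intro k
    by_cases hk : k < m
    · have heq : (cells r pi).filter (fun p => T0 m p = k)
          = (cells r pi).filter (fun p => p.1 = k) := by
        ext p
        simp only [Finset.mem_filter]; simp only [T0]
        constructor
        · rintro ⟨hp, h⟩
          split_ifs at h with h1
          · exact ⟨hp, h⟩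
          · omega
        · rintro ⟨hp, rfl⟩
          exact ⟨hp, if_pos hk⟩
      rw [heq, card_row hle hvanish, tildePi, if_pos hk]
    · obtain ⟨c, rfl⟩ : ∃ c, k = m + c := ⟨k - m, by omega⟩
      have heq : (cells r pi).filter (fun p => T0 m p = m + c)
          = (cells r pi).filter (fun p => m ≤ p.1 ∧ p.2 = c) := by
        ext p
        simp only [Finset.mem_filter]; simp only [T0]
        constructor
        · rintro ⟨hp, h⟩
          split_ifs at h with h1
          · omega
          · exact ⟨hp, by omega, by omega⟩
        · rintro ⟨hp, h1, rfl⟩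
          exact ⟨hp, by rw [if_neg (by omega)]⟩
      rw [heq, card_col hle]
  · intro i j _
    simp only [T0]
    split_ifs <;> omega
  · intro i j _
    simp only [T0]
    split_ifs <;> omega

lemma uniq_T0 (hanti : Antitone pi) (hsum : ∑ i ∈ Finset.range r, pi i = r)
    (hvanish : ∀ i, r ≤ i → pi i = 0) {T : ℕ × ℕ → ℕ}
    (hT : IsSSSupertableau m n r pi T (tildePi m r pi)) :
    ∀ p ∈ cells r pi, T p = T0 m p := by
  have hle := pi_le_r hanti hsum hvanish
  obtain ⟨hbd, hcont, hrow, hcol⟩ := hT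
  -- lower bound from columns
  have L1 : ∀ i j : ℕ, (i, j) ∈ cells r pi → min i m ≤ T (i, j) := by
    intro i
    induction i with
    | zero => intro j _; exact le_trans (by omega) (Nat.zero_le _)
    | succ i ih =>
      intro j hc
      rw [mem_cells' hle] at hc
      have hcell : ((i, j) : ℕ × ℕ) ∈ cells r pi :=
        (mem_cells' hle).mpr ⟨by omega, lt_of_lt_of_le hc.2 (hanti (Nat.le_succ i))⟩
      have h := hcol i j hc.2
      have hih := ih j hcell
      rcases lt_or_ge (T (i, j)) m with hlt | hge
      · have := h.2 hlt; omega
      · have := h.1; omega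
  -- lower bound from rows, for odd rows
  have L2 : ∀ j i : ℕ, m ≤ i → (i, j) ∈ cells r pi → m + j ≤ T (i, j) := by
    intro j
    induction j with
    | zero =>
      intro i hi hc
      have := L1 i 0 hc
      omega
    | succ j ih =>
      intro i hi hc
      rw [mem_cells' hle] at hc
      have hcell : ((i, j) : ℕ × ℕ) ∈ cells r pi :=
        (mem_cells' hle).mpr ⟨hc.1, by omega⟩
      have h := hrow i j hc.2
      have hih := ih i hi hcell
      have := h.2 (by omega)
      omega
  -- rows < m are constant
  have L3 : ∀ k : ℕ, k < m → ∀ j : ℕ, (k, j) ∈ cells r pi → T (k, j) = k := by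
    intro k
    induction k using Nat.strong_induction_on with
    | _ k ih =>
      intro hk j hcell
      have hsub : (cells r pi).filter (fun p => T p = k)
          ⊆ (cells r pi).filter (fun p => p.1 = k) := by
        rintro ⟨i, j'⟩ hp
        simp only [Finset.mem_filter] at hp ⊢
        obtain ⟨hc, hv⟩ := hp
        refine ⟨hc, ?_⟩
        have h1 := L1 i j' hc
        have him : i ≤ k := by omega
        rcases lt_or_eq_of_le him with hlt | heq
        · exfalso
          have := ih i hlt (by omega) j' hc
          omega
        · exact heq
      have hcard1 : ((cells r pi).filter (fun p => T p = k)).card = pi k := by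
        rw [hcont k, tildePi, if_pos hk]
      have hcard2 : ((cells r pi).filter (fun p => p.1 = k)).card = pi k :=
        card_row hle hvanish k
      have heq := Finset.eq_of_subset_of_card_le hsub (by omega)
      have hmem : ((k, j) : ℕ × ℕ) ∈ (cells r pi).filter (fun p => p.1 = k) :=
        Finset.mem_filter.mpr ⟨hcell, rfl⟩
      rw [← heq] at hmem
      simp only [Finset.mem_filter] at hmem
      exact hmem.2
  -- columns, in rows ≥ m, are constant
  have L4 : ∀ c i : ℕ, m ≤ i → (i, c) ∈ cells r pi → T (i, c) = m + c := by
    intro c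
    induction c using Nat.strong_induction_on with
    | _ c ih =>
      intro i hi hcell
      have hsub : (cells r pi).filter (fun p => T p = m + c)
          ⊆ (cells r pi).filter (fun p => m ≤ p.1 ∧ p.2 = c) := by
        rintro ⟨i', j'⟩ hp
        simp only [Finset.mem_filter] at hp ⊢
        obtain ⟨hc, hv⟩ := hp
        have hi' : m ≤ i' := by
          by_contra h
          have := L3 i' (by omega) j' hc
          omega
        refine ⟨hc, hi', ?_⟩
        have h2 := L2 j' i' hi' hc
        have hjc : j' ≤ c := by omega
        rcases lt_or_eq_of_le hjc with hlt | heq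
        · exfalso
          have := ih j' hlt i' hi' hc
          omega
        · exact heq
      have hcard1 : ((cells r pi).filter (fun p => T p = m + c)).card
          = tildePi m r pi (m + c) := hcont (m + c)
      have hcard2 : ((cells r pi).filter (fun p => m ≤ p.1 ∧ p.2 = c)).card
          = tildePi m r pi (m + c) := card_col hle c
      have heq := Finset.eq_of_subset_of_card_le hsub (by omega)
      have hmem : ((i, c) : ℕ × ℕ) ∈ (cells r pi).filter (fun p => m ≤ p.1 ∧ p.2 = c) :=
        Finset.mem_filter.mpr ⟨hcell, hi, rfl⟩
      rw [← heq] at hmem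
      simp only [Finset.mem_filter] at hmem
      exact hmem.2
  rintro ⟨i, j⟩ hp
  by_cases h : i < m
  · rw [L3 i h j hp]; simp [T0, h]
  · rw [L4 j i (by omega) hp]; simp [T0, h]

end UniqueSuper

/-- for a partition `π` of `r` with `π_{m+1} ≤ n`, there is exactly one
semistandard `π`-supertableau of content `π̃`. -/
theorem unique_superstandard_tableau (m n r : ℕ) (pi : ℕ → ℕ)
    (hanti : Antitone pi) (hsum : ∑ i ∈ Finset.range r, pi i = r)
    (hvanish : ∀ i, r ≤ i → pi i = 0) (hmn : pi m ≤ n) :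
    (∃ T : ℕ × ℕ → ℕ, IsSSSupertableau m n r pi T (tildePi m r pi)) ∧
    (∀ T T' : ℕ × ℕ → ℕ, IsSSSupertableau m n r pi T (tildePi m r pi) →
      IsSSSupertableau m n r pi T' (tildePi m r pi) →
      ∀ p ∈ cells r pi, T p = T' p) := by
  refine ⟨⟨T0 m, UniqueSuper.exists_T0 hanti hsum hvanish hmn⟩, ?_⟩
  intro T T' hT hT' p hp
  rw [UniqueSuper.uniq_T0 hanti hsum hvanish hT p hp,
    UniqueSuper.uniq_T0 hanti hsum hvanish hT' p hp]
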